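/- If G is a finite DC-group, then there exists a prime p such that G = P ⋊ A is a semidirect product of a Sylow p-subgroup P of G and an abelian p'-Hall subgroup A of G. -/

import Mathlib

/-- A group is a `DC`-group if the set of derived subgroups of its subgroups
is a chain under inclusion. -/
def IsDCGroup (G : Type*) [Group G] : Prop :=
  ∀ H K : Subgroup G, ⁅H, H⁆ ≤ ⁅K, K⁆ ∨ ⁅K, K⁆ ≤ ⁅H, H⁆

open Subgroup
open scoped commutatorElement

/-- If every nontrivial derived subgroup of a subgroup has cardinality divisible by `q`,
then for any prime `r ≠ q`, the normalizer of a Sylow `r`-subgroup centralizes it. -/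
lemma dc_normalizer_le_centralizer {G : Type*} [Group G] [Finite G] {q : ℕ} (hq : q.Prime)
    (hall : ∀ H : Subgroup G, ⁅H, H⁆ ≠ ⊥ → q ∣ Nat.card (⁅H, H⁆ : Subgroup G))
    {r : ℕ} (hr : r.Prime) (hrq : r ≠ q) (R : Sylow r G) :
    Subgroup.normalizer ((R : Subgroup G) : Set G) ≤ Subgroup.centralizer (R : Set G) := by
  haveI := Fact.mk hr
  intro g hg
  let M : Subgroup G := Subgroup.normalizer ((R : Subgroup G) : Set G)
  let R₀ : Subgroup M := (R : Subgroup G).subgroupOf M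
  haveI hR₀n : R₀.Normal := Subgroup.normal_in_normalizer
  let φ : M →* M ⧸ R₀ := QuotientGroup.mk' R₀
  let g' : M := ⟨g, hg⟩
  let T : Subgroup M := Subgroup.comap φ (Subgroup.zpowers (φ g'))
  let H : Subgroup G := (R : Subgroup G) ⊔ Subgroup.zpowers g
  have hker : ∀ m : M, φ m = 1 → m ∈ R₀ := by
    intro m hm
    have h2 := MonoidHom.mem_ker.mpr hm
    rwa [QuotientGroup.ker_mk'] at h2
  have hker' : ∀ m : M, m ∈ R₀ → φ m = 1 := by
    intro m hm
    exact MonoidHom.mem_ker.mp (by rwa [QuotientGroup.ker_mk'])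
  have hHT : H ≤ Subgroup.map M.subtype T := by
    apply sup_le
    · intro x hx
      refine ⟨⟨x, Subgroup.le_normalizer hx⟩, ?_, rfl⟩
      have h1 : φ (⟨x, Subgroup.le_normalizer hx⟩ : M) = 1 :=
        hker' _ (Subgroup.mem_subgroupOf.mpr hx)
      show φ _ ∈ Subgroup.zpowers (φ g')
      rw [h1]
      exact Subgroup.one_mem _
    · rw [Subgroup.zpowers_le]
      exact ⟨g', Subgroup.mem_zpowers _, rfl⟩
  have hcomm : ⁅H, H⁆ ≤ (R : Subgroup G) := by
    rw [Subgroup.commutator_le]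
    intro x hx y hy
    obtain ⟨x', hx', rfl⟩ := hHT hx
    obtain ⟨y', hy', rfl⟩ := hHT hy
    have hmap : M.subtype ⁅x', y'⁆ = ⁅M.subtype x', M.subtype y'⁆ :=
      map_commutatorElement _ _ _
    rw [← hmap]
    have hxin : φ x' ∈ Subgroup.zpowers (φ g') := hx'
    have hyin : φ y' ∈ Subgroup.zpowers (φ g') := hy'
    obtain ⟨m, hm⟩ := Subgroup.mem_zpowers_iff.mp hxin
    obtain ⟨n, hn⟩ := Subgroup.mem_zpowers_iff.mp hyin
    have hc : Commute (φ x') (φ y') := by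
      rw [← hm, ← hn]; exact (Commute.refl _).zpow_zpow m n
    have h1 : φ ⁅x', y'⁆ = 1 := by
      rw [map_commutatorElement]
      exact commutatorElement_eq_one_iff_commute.mpr hc
    exact Subgroup.mem_subgroupOf.mp (hker _ h1)
  have hbot : ⁅H, H⁆ = ⊥ := by
    by_contra hne
    have hq1 : q ∣ Nat.card (⁅H, H⁆ : Subgroup G) := hall H hne
    have hd : Nat.card (⁅H, H⁆ : Subgroup G) ∣ Nat.card (R : Subgroup G) :=
      Subgroup.card_dvd_of_le hcomm
    obtain ⟨n, hn⟩ := IsPGroup.iff_card.mp R.isPGroup'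
    rw [hn] at hd
    have : q ∣ r := hq.dvd_of_dvd_pow (hq1.trans hd)
    exact hrq ((Nat.prime_dvd_prime_iff_eq hq hr).mp this).symm
  rw [Subgroup.mem_centralizer_iff]
  intro x hx
  have hxH : x ∈ H := Subgroup.mem_sup_left hx
  have hgH : g ∈ H := Subgroup.mem_sup_right (Subgroup.mem_zpowers g)
  have hmem : ⁅x, g⁆ ∈ ⁅H, H⁆ := Subgroup.commutator_mem_commutator hxH hgH
  rw [hbot, Subgroup.mem_bot] at hmem
  exact (commutatorElement_eq_one_iff_commute.mp hmem).eq

/-- The main construction: if every nontrivial derived subgroup has cardinality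
divisible by a prime `q`, then `G` is a semidirect product of a normal Sylow
`q`-subgroup and an abelian `q'`-Hall subgroup. -/
lemma dc_aux {G : Type*} [Group G] [Finite G] {q : ℕ} (hq : q.Prime)
    (hall : ∀ H : Subgroup G, ⁅H, H⁆ ≠ ⊥ → q ∣ Nat.card (⁅H, H⁆ : Subgroup G)) :
    ∃ (p : ℕ) (_ : Fact p.Prime) (P : Sylow p G) (A : Subgroup G),
      (P : Subgroup G).Normal ∧
      (∀ a ∈ A, ∀ b ∈ A, a * b = b * a) ∧
      ¬ p ∣ Nat.card A ∧
      (P : Subgroup G) ⊓ A = ⊥ ∧ (P : Subgroup G) ⊔ A = ⊤ := by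
  haveI := Fact.mk hq
  obtain ⟨Q0⟩ : Nonempty (Sylow q G) := Sylow.nonempty
  -- for each prime r ≠ q, a normal subgroup avoiding r and containing Q0
  have key : ∀ r : ℕ, r.Prime → r ≠ q →
      ∃ N : Subgroup G, N.Normal ∧ ¬ r ∣ Nat.card N ∧ (Q0 : Subgroup G) ≤ N := by
    intro r hr hrq
    haveI := Fact.mk hr
    obtain ⟨R⟩ : Nonempty (Sylow r G) := Sylow.nonempty
    have hP := dc_normalizer_le_centralizer hq hall hr hrq R
    refine ⟨(MonoidHom.transferSylow R hP).ker, MonoidHom.normal_ker _, ?_, ?_⟩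
    · exact MonoidHom.not_dvd_card_ker_transferSylow R hP
    · intro x hx
      rw [MonoidHom.mem_ker]
      have h1 : orderOf ((MonoidHom.transferSylow R hP) x) ∣ orderOf x :=
        orderOf_map_dvd _ x
      obtain ⟨k, hk⟩ := (Q0.isPGroup' ⟨x, hx⟩)
      have hxq : orderOf x ∣ q ^ k := by
        have hco : x ^ q ^ k = 1 := by
          have := congrArg (Subgroup.subtype _) hk
          simpa using this
        exact orderOf_dvd_of_pow_eq_one hco
      obtain ⟨n, hn⟩ := IsPGroup.iff_card.mp R.isPGroup'
      have h2 : orderOf ((MonoidHom.transferSylow R hP) x) ∣ r ^ n := by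
        rw [← hn]; exact orderOf_dvd_natCard _
      have hcop : Nat.Coprime (q ^ k) (r ^ n) :=
        Nat.Coprime.pow _ _ ((Nat.coprime_primes hq hr).mpr (fun e => hrq e.symm))
      have hone : orderOf ((MonoidHom.transferSylow R hP) x) = 1 :=
        Nat.eq_one_of_dvd_coprimes hcop (h1.trans hxq) h2
      exact orderOf_eq_one_iff.mp hone
  choose N hnorm hndvd hle using key
  let I : Subgroup G := ⨅ (r : ℕ) (hr : r.Prime) (hrq : r ≠ q), N r hr hrq
  have hImem : ∀ x : G, x ∈ I ↔ ∀ (r : ℕ) (hr : r.Prime) (hrq : r ≠ q), x ∈ N r hr hrq := by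
    intro x
    constructor
    · intro hx r hr hrq
      rw [Subgroup.mem_iInf] at hx
      have := hx r
      rw [Subgroup.mem_iInf] at this
      have := this hr
      rw [Subgroup.mem_iInf] at this
      exact this hrq
    · intro hx
      rw [Subgroup.mem_iInf]
      intro r
      rw [Subgroup.mem_iInf]
      intro hr
      rw [Subgroup.mem_iInf]
      intro hrq
      exact hx r hr hrq
  have hInormal : I.Normal := by
    constructor
    intro n hn g
    rw [hImem] at hn ⊢
    intro r hr hrq
    exact (hnorm r hr hrq).conj_mem n (hn r hr hrq) g
  have hQ0I : (Q0 : Subgroup G) ≤ I := by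
    intro x hx
    rw [hImem]
    intro r hr hrq
    exact hle r hr hrq hx
  have hIp : IsPGroup q I := by
    have hcard : ∀ d, d.Prime → d ∣ Nat.card I → d = q := by
      intro d hd hdvd
      by_contra hne
      have hIle : I ≤ N d hd hne := fun x hx => (hImem x).mp hx d hd hne
      exact hndvd d hd hne (hdvd.trans (Subgroup.card_dvd_of_le hIle))
    have hpos : Nat.card I ≠ 0 := Nat.card_pos.ne'
    exact IsPGroup.of_card (Nat.eq_prime_pow_of_unique_prime_dvd hpos
      (fun {d} hd hdvd => hcard d hd hdvd))
  have hIQ0 : I = (Q0 : Subgroup G) := Q0.is_maximal' hIp hQ0I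
  rw [hIQ0] at hInormal
  haveI : (Q0 : Subgroup G).Normal := hInormal
  have hcop : Nat.Coprime (Nat.card (Q0 : Subgroup G)) (Q0 : Subgroup G).index :=
    Q0.card_coprime_index
  obtain ⟨A, hA⟩ := Subgroup.exists_right_complement'_of_coprime hcop
  have hcardA : Nat.card A = (Q0 : Subgroup G).index := (hA.symm.index_eq_card).symm
  have hqA : ¬ q ∣ Nat.card A := by
    rw [hcardA]; exact Q0.not_dvd_index
  refine ⟨q, Fact.mk hq, Q0, A, inferInstance, ?_, hqA, ?_, ?_⟩
  · intro a ha b hb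
    have hAbot : ⁅A, A⁆ = ⊥ := by
      by_contra hne
      have h1 : q ∣ Nat.card (⁅A, A⁆ : Subgroup G) := hall A hne
      have h2 : Nat.card (⁅A, A⁆ : Subgroup G) ∣ Nat.card A := by
        refine Subgroup.card_dvd_of_le (Subgroup.commutator_le.mpr ?_)
        intro x hx y hy
        rw [commutatorElement_def]
        exact A.mul_mem (A.mul_mem (A.mul_mem hx hy) (A.inv_mem hx)) (A.inv_mem hy)
      exact hqA (h1.trans h2)
    have hmem : ⁅a, b⁆ ∈ ⁅A, A⁆ := Subgroup.commutator_mem_commutator ha hb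
    rw [hAbot, Subgroup.mem_bot] at hmem
    exact (commutatorElement_eq_one_iff_commute.mp hmem).eq
  · exact disjoint_iff.mp hA.disjoint
  · exact hA.sup_eq_top

theorem dc_group_semidirect (G : Type*) [Group G] [Finite G] (h : IsDCGroup G) :
    ∃ (p : ℕ) (_ : Fact p.Prime) (P : Sylow p G) (A : Subgroup G),
      (P : Subgroup G).Normal ∧
      (∀ a ∈ A, ∀ b ∈ A, a * b = b * a) ∧
      ¬ p ∣ Nat.card A ∧
      (P : Subgroup G) ⊓ A = ⊥ ∧ (P : Subgroup G) ⊔ A = ⊤ := by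
  by_cases hab : ∀ H : Subgroup G, ⁅H, H⁆ = ⊥
  · exact dc_aux Nat.prime_two (fun H hH => absurd (hab H) hH)
  · push_neg at hab
    obtain ⟨H₀, hH₀⟩ := hab
    -- choose a nontrivial derived subgroup of minimal cardinality
    have hSne : (Nat.card (⁅H₀, H₀⁆ : Subgroup G)) ∈
        {n | ∃ H : Subgroup G, ⁅H, H⁆ ≠ ⊥ ∧ Nat.card (⁅H, H⁆ : Subgroup G) = n} :=
      ⟨H₀, hH₀, rfl⟩
    obtain ⟨D, hDne, hDcard⟩ := Nat.sInf_mem (Set.nonempty_of_mem hSne)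
    have hD1 : Nat.card (⁅D, D⁆ : Subgroup G) ≠ 1 :=
      fun e => hDne (Subgroup.card_eq_one.mp e)
    obtain ⟨q, hq, hqD⟩ := Nat.exists_prime_and_dvd hD1
    apply dc_aux hq
    intro H hH
    rcases h H D with hc | hc
    · -- ⁅H,H⁆ ≤ ⁅D,D⁆ : then card ⁅H,H⁆ = card ⁅D,D⁆ by minimality
      have h1 : Nat.card (⁅H, H⁆ : Subgroup G) ∣ Nat.card (⁅D, D⁆ : Subgroup G) :=
        Subgroup.card_dvd_of_le hc
      have h2 : Nat.card (⁅D, D⁆ : Subgroup G) ≤ Nat.card (⁅H, H⁆ : Subgroup G) := by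
        rw [hDcard]
        exact Nat.sInf_le ⟨H, hH, rfl⟩
      have h3 : Nat.card (⁅H, H⁆ : Subgroup G) = Nat.card (⁅D, D⁆ : Subgroup G) :=
        Nat.le_antisymm (Nat.le_of_dvd Nat.card_pos h1) h2
      rw [h3]
      exact hqD
    · -- ⁅D,D⁆ ≤ ⁅H,H⁆
      exact hqD.trans (Subgroup.card_dvd_of_le hc)
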